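/- Let (t_k) be a sequence of positive reals with t_k → 0, for each k let (x^k,y^k) be a Karush–Kuhn–Tucker point of the Scholtes-type regularization S(t_k), and suppose (x^k,y^k) → (x̄,ȳ) where (x̄,ȳ) is a nondegenerate T-stationary point of the regularized continuous reformulation R. Then for all sufficiently large k the upper-bound active index sets coincide: E(ȳ) = E(y^k). -/

import Mathlib

open scoped Classical
open Finset Filter Topology

noncomputable section
namespace Scholtes

/-- Vectors in ℝⁿ. -/
abbrev Vec (n : ℕ) := Fin n → ℝ

variable {n : ℕ} {P Q : Type*} [Fintype P] [Fintype Q]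

/-- Euclidean dot product. -/
def dot (u v : Vec n) : ℝ := ∑ i, u i * v i

/-- Gradient: vector of partial derivatives. -/
def grad (f : Vec n → ℝ) (x : Vec n) : Vec n := fun i => fderiv ℝ f x (Pi.single i 1)

/-- Hessian bilinear form of `L` at `z`, evaluated at directions `ξ`, `ζ`. -/
def hess (L : Vec n × Vec n → ℝ) (z ξ ζ : Vec n × Vec n) : ℝ :=
  fderiv ℝ (fun w => fderiv ℝ L w ξ) z ζ

/-- The pair vector (e_i, 0) ∈ ℝ²ⁿ. -/
def ex (i : Fin n) : Vec n × Vec n := (Pi.single i 1, 0)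

/-- The pair vector (0, e_i) ∈ ℝ²ⁿ. -/
def ey (i : Fin n) : Vec n × Vec n := (0, Pi.single i 1)

/-- The pair vector (0, e) ∈ ℝ²ⁿ, where e is the all-ones vector. -/
def eAll : Vec n × Vec n := (0, fun _ => 1)

/-- The pair vector (y_i e_i, x_i e_i) ∈ ℝ²ⁿ. -/
def hvec (x y : Vec n) (i : Fin n) : Vec n × Vec n := (Pi.single i (y i), Pi.single i (x i))

/-- The number of negative eigenvalues of the bilinear form `B` restricted to the
(sub)space `T`, expressed as the maximal dimension of a linear subspace of `T` on
which the associated quadratic form is negative definite. -/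
def negIndex (B : (Vec n × Vec n) → (Vec n × Vec n) → ℝ) (T : (Vec n × Vec n) → Prop) : ℕ :=
  sSup {d : ℕ | ∃ W : Submodule ℝ (Vec n × Vec n),
    (∀ ξ ∈ W, T ξ) ∧ Module.finrank ℝ W = d ∧ ∀ ξ ∈ W, ξ ≠ 0 → B ξ ξ < 0}

/-- The data and standing assumptions of the paper: objective `f`, equality
constraints `h`, inequality constraints `g`, positive pairwise different linear
coefficients `c`, cardinality bound `s` and regularization parameter `ε`. -/
structure Setting (n : ℕ) (P Q : Type*) [Fintype P] [Fintype Q] where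
  f : Vec n → ℝ
  h : P → Vec n → ℝ
  g : Q → Vec n → ℝ
  c : Vec n
  s : ℕ
  ε : ℝ
  hn : 1 ≤ n
  hf : ContDiff ℝ 2 f
  hh : ∀ p, ContDiff ℝ 2 (h p)
  hg : ∀ q, ContDiff ℝ 2 (g q)
  hcpos : ∀ i, 0 < c i
  hcinj : Function.Injective c
  hs : s < n
  hεpos : 0 < ε
  hεle : ε ≤ 1 / ((n : ℝ) - s)

/-- Index set a01: x̄_i = 0, ȳ_i > 0. -/
def a01 (x y : Vec n) : Finset (Fin n) := univ.filter fun i => x i = 0 ∧ 0 < y i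

/-- Index set a10: x̄_i ≠ 0, ȳ_i = 0. -/
def a10 (x y : Vec n) : Finset (Fin n) := univ.filter fun i => x i ≠ 0 ∧ y i = 0

/-- Index set a00: x̄_i = 0, ȳ_i = 0. -/
def a00 (x y : Vec n) : Finset (Fin n) := univ.filter fun i => x i = 0 ∧ y i = 0

/-- Index set N(y): y_i = 0. -/
def Nact (y : Vec n) : Finset (Fin n) := univ.filter fun i => y i = 0

/-- Index set H≥(x,y): x_i y_i = −t. -/
def Hge (t : ℝ) (x y : Vec n) : Finset (Fin n) := univ.filter fun i => x i * y i = -t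

/-- Index set H≤(x,y): x_i y_i = t. -/
def Hle (t : ℝ) (x y : Vec n) : Finset (Fin n) := univ.filter fun i => x i * y i = t

/-- Index set H(x,y) = H≥ ∪ H≤. -/
def Hact (t : ℝ) (x y : Vec n) : Finset (Fin n) := Hge t x y ∪ Hle t x y

/-- Active inequality constraints Q0(x). -/
def Q0 (D : Setting n P Q) (x : Vec n) : Finset Q := univ.filter fun q => D.g q x = 0

/-- Active upper bounds E(y): y_i = 1 + ε. -/
def Eact (D : Setting n P Q) (y : Vec n) : Finset (Fin n) := univ.filter fun i => y i = 1 + D.ε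

/-- Index set O(x,y) = complement of E(y) ∪ N(y) ∪ H(x,y). -/
def Oact (D : Setting n P Q) (t : ℝ) (x y : Vec n) : Finset (Fin n) :=
  (Eact D y ∪ Nact y ∪ Hact t x y)ᶜ

/-- Feasibility for the regularized continuous reformulation R. -/
def feasR (D : Setting n P Q) (x y : Vec n) : Prop :=
  (∀ p, D.h p x = 0) ∧ (∀ q, 0 ≤ D.g q x) ∧ ((n : ℝ) - D.s ≤ ∑ i, y i) ∧
  (∀ i, x i * y i = 0) ∧ (∀ i, 0 ≤ y i ∧ y i ≤ 1 + D.ε)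

/-- Feasibility for the Scholtes-type regularization S(t). -/
def feasS (D : Setting n P Q) (t : ℝ) (x y : Vec n) : Prop :=
  (∀ p, D.h p x = 0) ∧ (∀ q, 0 ≤ D.g q x) ∧ ((n : ℝ) - D.s ≤ ∑ i, y i) ∧
  (∀ i, -t ≤ x i * y i ∧ x i * y i ≤ t) ∧ (∀ i, 0 ≤ y i ∧ y i ≤ 1 + D.ε)

/-- Multipliers for T-stationarity (defined on the whole index ranges). -/
structure TMult (n : ℕ) (P Q : Type*) where
  lam : P → ℝ
  mu1 : Q → ℝ
  mu2 : Fin n → ℝ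
  mu3 : ℝ
  sig1 : Fin n → ℝ
  sig2 : Fin n → ℝ
  rho1 : Fin n → ℝ
  rho2 : Fin n → ℝ

/-- The T-stationarity equation (1) of Definition 2. -/
def TStatEq (D : Setting n P Q) (x y : Vec n) (M : TMult n P Q) : Prop :=
  ((grad D.f x, D.c) : Vec n × Vec n) =
    (∑ p, M.lam p • ((grad (D.h p) x, (0 : Vec n)) : Vec n × Vec n))
    + (∑ q ∈ Q0 D x, M.mu1 q • ((grad (D.g q) x, (0 : Vec n)) : Vec n × Vec n))
    - (∑ i ∈ Eact D y, M.mu2 i • ey i)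
    + M.mu3 • eAll
    + (∑ i ∈ a01 x y, M.sig1 i • ex i)
    + (∑ i ∈ a10 x y, M.sig2 i • ey i)
    + (∑ i ∈ a00 x y, (M.rho1 i • ex i + M.rho2 i • ey i))

/-- (x,y) is a T-stationary point of R with multipliers M. -/
def TStatAt (D : Setting n P Q) (x y : Vec n) (M : TMult n P Q) : Prop :=
  feasR D x y ∧
  (∀ q ∈ Q0 D x, 0 ≤ M.mu1 q) ∧
  (∀ i ∈ Eact D y, 0 ≤ M.mu2 i) ∧
  0 ≤ M.mu3 ∧
  M.mu3 * ((∑ i, y i) - ((n : ℝ) - D.s)) = 0 ∧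
  (∀ i ∈ a00 x y, M.rho1 i = 0 ∨ M.rho2 i ≤ 0) ∧
  TStatEq D x y M

/-- (x,y) is a T-stationary point of R. -/
def TStat (D : Setting n P Q) (x y : Vec n) : Prop := ∃ M, TStatAt D x y M

/-- MPOC-tailored LICQ at a feasible point (x,y) of R: the indicated family of
vectors in ℝ²ⁿ is linearly independent. -/
def MPOC_LICQ (D : Setting n P Q) (x y : Vec n) : Prop :=
  ∀ (lam : P → ℝ) (mu1 : Q → ℝ) (mu2 : Fin n → ℝ) (mu3 : ℝ) (s1 s2 : Fin n → ℝ),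
    ((∑ i, y i) ≠ (n : ℝ) - D.s → mu3 = 0) →
    (∑ p, lam p • ((grad (D.h p) x, (0 : Vec n)) : Vec n × Vec n))
    + (∑ q ∈ Q0 D x, mu1 q • ((grad (D.g q) x, (0 : Vec n)) : Vec n × Vec n))
    + (∑ i ∈ Eact D y, mu2 i • ey i)
    + mu3 • eAll
    + (∑ i ∈ a01 x y ∪ a00 x y, s1 i • ex i)
    + (∑ i ∈ a10 x y ∪ a00 x y, s2 i • ey i) = 0 →
    (∀ p, lam p = 0) ∧ (∀ q ∈ Q0 D x, mu1 q = 0) ∧ (∀ i ∈ Eact D y, mu2 i = 0) ∧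
    mu3 = 0 ∧ (∀ i ∈ a01 x y ∪ a00 x y, s1 i = 0) ∧ (∀ i ∈ a10 x y ∪ a00 x y, s2 i = 0)

/-- The Lagrange function L^R associated with the T-stationary point (x̄,ȳ)
and multipliers M. -/
def LagR (D : Setting n P Q) (xb yb : Vec n) (M : TMult n P Q) (z : Vec n × Vec n) : ℝ :=
  D.f z.1 + dot D.c z.2
    - (∑ p, M.lam p * D.h p z.1)
    - (∑ q ∈ Q0 D xb, M.mu1 q * D.g q z.1)
    + (∑ i ∈ Eact D yb, M.mu2 i * (z.2 i - (1 + D.ε)))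
    - M.mu3 * ((∑ i, z.2 i) - ((n : ℝ) - D.s))
    - (∑ i ∈ a01 xb yb, M.sig1 i * z.1 i)
    - (∑ i ∈ a10 xb yb, M.sig2 i * z.2 i)
    - (∑ i ∈ a00 xb yb, (M.rho1 i * z.1 i + M.rho2 i * z.2 i))

/-- Membership in the tangent space T^R at (x̄,ȳ). -/
def inTR (D : Setting n P Q) (x y : Vec n) (ξ : Vec n × Vec n) : Prop :=
  (∀ p, dot (grad (D.h p) x) ξ.1 = 0) ∧
  (∀ q ∈ Q0 D x, dot (grad (D.g q) x) ξ.1 = 0) ∧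
  (∀ i ∈ Eact D y, ξ.2 i = 0) ∧
  ((∑ i, y i) = (n : ℝ) - D.s → (∑ i, ξ.2 i) = 0) ∧
  (∀ i ∈ a00 x y ∪ a01 x y, ξ.1 i = 0) ∧
  (∀ i ∈ a00 x y ∪ a10 x y, ξ.2 i = 0)

/-- Nondegenerate T-stationary point with multipliers M (NDT1–NDT4). -/
def NondegTStatAt (D : Setting n P Q) (x y : Vec n) (M : TMult n P Q) : Prop :=
  TStatAt D x y M ∧
  MPOC_LICQ D x y ∧
  (∀ q ∈ Q0 D x, 0 < M.mu1 q) ∧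
  (∀ i ∈ Eact D y, 0 < M.mu2 i) ∧
  ((∑ i, y i) = (n : ℝ) - D.s → 0 < M.mu3) ∧
  (∀ i ∈ a00 x y, M.rho1 i ≠ 0 ∧ M.rho2 i < 0) ∧
  (∀ ξ, inTR D x y ξ → (∀ ζ, inTR D x y ζ → hess (LagR D x y M) (x, y) ξ ζ = 0) → ξ = 0)

/-- T-index: quadratic index (number of negative eigenvalues of the restricted
Hessian of L^R) plus the biactive index |a00|. -/
def TIndex (D : Setting n P Q) (x y : Vec n) (M : TMult n P Q) : ℕ :=
  negIndex (hess (LagR D x y M) (x, y)) (inTR D x y) + (a00 x y).card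

/-- Multipliers for KKT points of S(t) (defined on the whole index ranges). -/
structure SMult (n : ℕ) (P Q : Type*) where
  lam : P → ℝ
  mu1 : Q → ℝ
  mu2 : Fin n → ℝ
  mu3 : ℝ
  etaGe : Fin n → ℝ
  etaLe : Fin n → ℝ
  nu : Fin n → ℝ

/-- The KKT equation for S(t). -/
def KKTEq (D : Setting n P Q) (t : ℝ) (x y : Vec n) (M : SMult n P Q) : Prop :=
  ((grad D.f x, D.c) : Vec n × Vec n) =
    (∑ p, M.lam p • ((grad (D.h p) x, (0 : Vec n)) : Vec n × Vec n))
    + (∑ q ∈ Q0 D x, M.mu1 q • ((grad (D.g q) x, (0 : Vec n)) : Vec n × Vec n))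
    - (∑ i ∈ Eact D y, M.mu2 i • ey i)
    + M.mu3 • eAll
    + (∑ i ∈ Hge t x y, M.etaGe i • hvec x y i)
    - (∑ i ∈ Hle t x y, M.etaLe i • hvec x y i)
    + (∑ i ∈ Nact y, M.nu i • ey i)

/-- (x,y) is a KKT point of S(t) with multipliers M. -/
def KKTAt (D : Setting n P Q) (t : ℝ) (x y : Vec n) (M : SMult n P Q) : Prop :=
  feasS D t x y ∧
  (∀ q ∈ Q0 D x, 0 ≤ M.mu1 q) ∧
  (∀ i ∈ Eact D y, 0 ≤ M.mu2 i) ∧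
  0 ≤ M.mu3 ∧
  M.mu3 * ((∑ i, y i) - ((n : ℝ) - D.s)) = 0 ∧
  (∀ i ∈ Hge t x y, 0 ≤ M.etaGe i) ∧
  (∀ i ∈ Hle t x y, 0 ≤ M.etaLe i) ∧
  (∀ i ∈ Nact y, 0 ≤ M.nu i) ∧
  KKTEq D t x y M

/-- (x,y) is a KKT point of S(t). -/
def KKT (D : Setting n P Q) (t : ℝ) (x y : Vec n) : Prop := ∃ M, KKTAt D t x y M

/-- LICQ at a feasible point (x,y) of S(t). -/
def LICQ (D : Setting n P Q) (t : ℝ) (x y : Vec n) : Prop :=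
  ∀ (lam : P → ℝ) (mu1 : Q → ℝ) (mu2 : Fin n → ℝ) (mu3 : ℝ) (eta nu : Fin n → ℝ),
    ((∑ i, y i) ≠ (n : ℝ) - D.s → mu3 = 0) →
    (∑ p, lam p • ((grad (D.h p) x, (0 : Vec n)) : Vec n × Vec n))
    + (∑ q ∈ Q0 D x, mu1 q • ((grad (D.g q) x, (0 : Vec n)) : Vec n × Vec n))
    + (∑ i ∈ Eact D y, mu2 i • ey i)
    + mu3 • eAll
    + (∑ i ∈ Hact t x y, eta i • hvec x y i)
    + (∑ i ∈ Nact y, nu i • ey i) = 0 →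
    (∀ p, lam p = 0) ∧ (∀ q ∈ Q0 D x, mu1 q = 0) ∧ (∀ i ∈ Eact D y, mu2 i = 0) ∧
    mu3 = 0 ∧ (∀ i ∈ Hact t x y, eta i = 0) ∧ (∀ i ∈ Nact y, nu i = 0)

/-- The Lagrange function L^S associated with the KKT point (x̄,ȳ) of S(t)
and multipliers M. -/
def LagS (D : Setting n P Q) (t : ℝ) (xb yb : Vec n) (M : SMult n P Q)
    (z : Vec n × Vec n) : ℝ :=
  D.f z.1 + dot D.c z.2
    - (∑ p, M.lam p * D.h p z.1)
    - (∑ q ∈ Q0 D xb, M.mu1 q * D.g q z.1)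
    + (∑ i ∈ Eact D yb, M.mu2 i * (z.2 i - (1 + D.ε)))
    - M.mu3 * ((∑ i, z.2 i) - ((n : ℝ) - D.s))
    - (∑ i ∈ Hge t xb yb, M.etaGe i * (z.1 i * z.2 i + t))
    + (∑ i ∈ Hle t xb yb, M.etaLe i * (z.1 i * z.2 i - t))
    - (∑ i ∈ Nact yb, M.nu i * z.2 i)

/-- Membership in the tangent space T^S at (x,y) for S(t). -/
def inTS (D : Setting n P Q) (t : ℝ) (x y : Vec n) (ξ : Vec n × Vec n) : Prop :=
  (∀ p, dot (grad (D.h p) x) ξ.1 = 0) ∧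
  (∀ q ∈ Q0 D x, dot (grad (D.g q) x) ξ.1 = 0) ∧
  (∀ i ∈ Eact D y, ξ.2 i = 0) ∧
  ((∑ i, y i) = (n : ℝ) - D.s → (∑ i, ξ.2 i) = 0) ∧
  (∀ i ∈ Hact t x y, y i * ξ.1 i + x i * ξ.2 i = 0) ∧
  (∀ i ∈ Nact y, ξ.2 i = 0)

/-- Nondegenerate KKT point of S(t) with multipliers M (ND1–ND3). -/
def NondegKKTAt (D : Setting n P Q) (t : ℝ) (x y : Vec n) (M : SMult n P Q) : Prop :=
  KKTAt D t x y M ∧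
  LICQ D t x y ∧
  (∀ q ∈ Q0 D x, 0 < M.mu1 q) ∧
  (∀ i ∈ Eact D y, 0 < M.mu2 i) ∧
  (∀ i ∈ Hge t x y, 0 < M.etaGe i) ∧
  (∀ i ∈ Hle t x y, 0 < M.etaLe i) ∧
  (∀ i ∈ Nact y, 0 < M.nu i) ∧
  ((∑ i, y i) = (n : ℝ) - D.s → 0 < M.mu3) ∧
  (∀ ξ, inTS D t x y ξ → (∀ ζ, inTS D t x y ζ → hess (LagS D t x y M) (x, y) ξ ζ = 0) → ξ = 0)

/-- Quadratic index of a KKT point of S(t): number of negative eigenvalues of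
the restricted Hessian of L^S. -/
def QIdx (D : Setting n P Q) (t : ℝ) (x y : Vec n) (M : SMult n P Q) : ℕ :=
  negIndex (hess (LagS D t x y M) (x, y)) (inTS D t x y)

section Aux

lemma mem_Eact_iff {D : Setting n P Q} {y : Vec n} {i : Fin n} :
    i ∈ Eact D y ↔ y i = 1 + D.ε := by simp [Eact]

lemma mem_Nact_iff {y : Vec n} {i : Fin n} : i ∈ Nact y ↔ y i = 0 := by simp [Nact]

lemma mem_Hge_iff {t : ℝ} {x y : Vec n} {i : Fin n} : i ∈ Hge t x y ↔ x i * y i = -t := by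
  simp [Hge]

lemma mem_Hle_iff {t : ℝ} {x y : Vec n} {i : Fin n} : i ∈ Hle t x y ↔ x i * y i = t := by
  simp [Hle]

lemma mem_Q0_iff {D : Setting n P Q} {x : Vec n} {q : Q} : q ∈ Q0 D x ↔ D.g q x = 0 := by
  simp [Q0]

lemma mem_a01_iff {x y : Vec n} {i : Fin n} : i ∈ a01 x y ↔ x i = 0 ∧ 0 < y i := by simp [a01]

lemma mem_a10_iff {x y : Vec n} {i : Fin n} : i ∈ a10 x y ↔ x i ≠ 0 ∧ y i = 0 := by simp [a10]

lemma mem_a00_iff {x y : Vec n} {i : Fin n} : i ∈ a00 x y ↔ x i = 0 ∧ y i = 0 := by simp [a00]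

lemma grad_continuous {f : Vec n → ℝ} (hf : ContDiff ℝ 2 f) :
    Continuous fun x => grad f x := by
  have h1 : Continuous (fderiv ℝ f) := hf.continuous_fderiv (by norm_num)
  exact continuous_pi fun i =>
    (ContinuousLinearMap.apply ℝ ℝ (Pi.single i 1 : Vec n)).continuous.comp h1

lemma sum_finset_smul {α : Type*} [Fintype α] (S : Finset α) (c : α → ℝ)
    (v : α → Vec n × Vec n) [DecidablePred (· ∈ S)] :
    ∑ i ∈ S, c i • v i = ∑ i, (if i ∈ S then c i else 0) • v i := by
  rw [← Finset.sum_subset (Finset.subset_univ S)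
    (fun i _ hi => by rw [if_neg hi, zero_smul])]
  exact Finset.sum_congr rfl fun i hi => by rw [if_pos hi]

lemma single_eq_smul (i : Fin n) (a : ℝ) : Pi.single i a = a • (Pi.single i 1 : Vec n) := by
  funext j
  by_cases h : j = i <;> simp [Pi.single_apply, h]

lemma hvec_eq (x y : Vec n) (i : Fin n) : hvec x y i = y i • ex i + x i • ey i := by
  unfold hvec ex ey
  ext j
  · simp [single_eq_smul i (y i), Pi.single_apply]
  · simp [single_eq_smul i (x i), Pi.single_apply]

lemma sum_finset_smul_hvec (S : Finset (Fin n)) (c : Fin n → ℝ) (x y : Vec n) :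
    ∑ i ∈ S, c i • hvec x y i
      = (∑ i, (if i ∈ S then c i * y i else 0) • ex i)
        + (∑ i, (if i ∈ S then c i * x i else 0) • ey i) := by
  rw [sum_finset_smul, ← Finset.sum_add_distrib]
  apply Finset.sum_congr rfl
  intro i _
  by_cases h : i ∈ S
  · simp only [h, if_true, hvec_eq, smul_add, smul_smul]
  · simp [h]

end Aux
section Aux2

/-- Combined `ex`-coefficient of the KKT equation at index `i`. -/
def w1c (t : ℝ) (x y : Vec n) (M : SMult n P Q) (i : Fin n) : ℝ :=
  (if i ∈ Hge t x y then M.etaGe i * y i else 0)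
    - (if i ∈ Hle t x y then M.etaLe i * y i else 0)

/-- Combined `ey`-coefficient of the KKT equation at index `i`. -/
def w2c (D : Setting n P Q) (t : ℝ) (x y : Vec n) (M : SMult n P Q) (i : Fin n) : ℝ :=
  (if i ∈ Nact y then M.nu i else 0)
    + ((if i ∈ Hge t x y then M.etaGe i * x i else 0)
        - (if i ∈ Hle t x y then M.etaLe i * x i else 0))
    - (if i ∈ Eact D y then M.mu2 i else 0)

lemma w_abs (D : Setting n P Q) {t : ℝ} (ht : 0 < t) (x y : Vec n) (M : SMult n P Q)
    (i : Fin n) (hiE : i ∉ Eact D y) :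
    |w1c t x y M i| * |x i| = |w2c D t x y M i| * |y i| := by
  have hE0 : (if i ∈ Eact D y then M.mu2 i else 0) = 0 := if_neg hiE
  by_cases hG : i ∈ Hge t x y
  · have hxy := mem_Hge_iff.1 hG
    have hL : i ∉ Hle t x y := by
      intro hL
      have := mem_Hle_iff.1 hL
      rw [hxy] at this; linarith
    have hy : y i ≠ 0 := by
      intro h0
      rw [h0, mul_zero] at hxy; linarith
    have hN : i ∉ Nact y := fun h => hy (mem_Nact_iff.1 h)
    simp only [w1c, w2c, hE0, if_pos hG, if_neg hL, if_neg hN]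
    rw [sub_zero, zero_add, sub_zero, sub_zero, abs_mul, abs_mul]
    ring
  · by_cases hL : i ∈ Hle t x y
    · have hxy := mem_Hle_iff.1 hL
      have hy : y i ≠ 0 := by
        intro h0
        rw [h0, mul_zero] at hxy; linarith
      have hN : i ∉ Nact y := fun h => hy (mem_Nact_iff.1 h)
      simp only [w1c, w2c, hE0, if_pos hL, if_neg hG, if_neg hN]
      rw [zero_sub, zero_sub, zero_add, sub_zero, abs_neg, abs_neg, abs_mul, abs_mul]
      ring
    · by_cases hN : i ∈ Nact y
      · have hy := mem_Nact_iff.1 hN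
        simp [w1c, w2c, hE0, hG, hL, hy]
      · simp [w1c, w2c, hE0, hG, hL, hN]

/-- KKT equation rewritten with sums over the whole index ranges. -/
lemma kkt_univ_form (D : Setting n P Q) (t : ℝ) (x y : Vec n) (M : SMult n P Q)
    (hE : KKTEq D t x y M) :
    ((grad D.f x, D.c) : Vec n × Vec n) =
      (∑ p, M.lam p • ((grad (D.h p) x, (0 : Vec n)) : Vec n × Vec n))
      + (∑ q, (if q ∈ Q0 D x then M.mu1 q else 0) •
          ((grad (D.g q) x, (0 : Vec n)) : Vec n × Vec n))
      + M.mu3 • eAll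
      + (∑ i, w1c t x y M i • ex i)
      + (∑ i, w2c D t x y M i • ey i) := by
  have key : ((grad D.f x, D.c) : Vec n × Vec n) =
      (∑ p, M.lam p • ((grad (D.h p) x, (0 : Vec n)) : Vec n × Vec n))
      + (∑ q, (if q ∈ Q0 D x then M.mu1 q else 0) •
          ((grad (D.g q) x, (0 : Vec n)) : Vec n × Vec n))
      + M.mu3 • eAll
      + (∑ i, ((if i ∈ Hge t x y then M.etaGe i * y i else 0)
          - (if i ∈ Hle t x y then M.etaLe i * y i else 0)) • ex i)
      + (∑ i, ((if i ∈ Nact y then M.nu i else 0)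
          + ((if i ∈ Hge t x y then M.etaGe i * x i else 0)
              - (if i ∈ Hle t x y then M.etaLe i * x i else 0))
          - (if i ∈ Eact D y then M.mu2 i else 0)) • ey i) := by
    rw [hE]
    rw [sum_finset_smul (Q0 D x) M.mu1, sum_finset_smul (Eact D y) M.mu2,
      sum_finset_smul (Nact y) M.nu, sum_finset_smul_hvec (Hge t x y) M.etaGe x y,
      sum_finset_smul_hvec (Hle t x y) M.etaLe x y]
    simp only [sub_smul, add_smul, Finset.sum_add_distrib, Finset.sum_sub_distrib]
    abel
  exact key

/-- T-stationarity equation rewritten with sums over the whole index ranges. -/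
lemma tstat_univ_form (D : Setting n P Q) (x y : Vec n) (M : TMult n P Q)
    (hE : TStatEq D x y M) :
    ((grad D.f x, D.c) : Vec n × Vec n) =
      (∑ p, M.lam p • ((grad (D.h p) x, (0 : Vec n)) : Vec n × Vec n))
      + (∑ q, (if q ∈ Q0 D x then M.mu1 q else 0) •
          ((grad (D.g q) x, (0 : Vec n)) : Vec n × Vec n))
      + M.mu3 • eAll
      + (∑ i, ((if i ∈ a01 x y then M.sig1 i else 0)
          + (if i ∈ a00 x y then M.rho1 i else 0)) • ex i)
      + (∑ i, ((if i ∈ a10 x y then M.sig2 i else 0)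
          + (if i ∈ a00 x y then M.rho2 i else 0)
          - (if i ∈ Eact D y then M.mu2 i else 0)) • ey i) := by
  rw [hE]
  rw [Finset.sum_add_distrib (s := a00 x y)]
  rw [sum_finset_smul (Q0 D x) M.mu1, sum_finset_smul (Eact D y) M.mu2,
    sum_finset_smul (a01 x y) M.sig1, sum_finset_smul (a10 x y) M.sig2,
    sum_finset_smul (a00 x y) M.rho1, sum_finset_smul (a00 x y) M.rho2]
  simp only [sub_smul, add_smul, Finset.sum_add_distrib, Finset.sum_sub_distrib]
  abel

end Aux2
section Aux3

/-- Existence of a limit along an ultrafilter for a bounded real sequence. -/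
lemma exists_ulim (U : Ultrafilter ℕ) (u : ℕ → ℝ) (hb : ∀ k, |u k| ≤ 1) :
    ∃ a, Filter.Tendsto u (U : Filter ℕ) (nhds a) := by
  obtain ⟨a, -, ha⟩ := isCompact_Icc.ultrafilter_le_nhds (Ultrafilter.map u U) (by
    rw [Filter.le_principal_iff, Ultrafilter.coe_map, Filter.mem_map]
    exact Filter.univ_mem' fun k => Set.mem_Icc.2 (abs_le.1 (hb k)))
  refine ⟨a, ?_⟩
  rwa [Ultrafilter.coe_map] at ha

lemma abs_inv_mul_le {r a : ℝ} (h1 : 1 ≤ r) (h2 : |a| ≤ r) : |r⁻¹ * a| ≤ 1 := by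
  have h0 : 0 < r := lt_of_lt_of_le one_pos h1
  rw [abs_mul, abs_inv, abs_of_pos h0]
  calc r⁻¹ * |a| ≤ r⁻¹ * r := by
        exact mul_le_mul_of_nonneg_left h2 (inv_nonneg.2 h0.le)
    _ = 1 := inv_mul_cancel₀ h0.ne'

/-- MPOC-LICQ applied to a linear combination written with sums over the whole
index ranges. -/
lemma licq_univ (D : Setting n P Q) (xb yb : Vec n) (hL : MPOC_LICQ D xb yb)
    (hy0 : ∀ i, 0 ≤ yb i)
    (lam : P → ℝ) (mu1 : Q → ℝ) (m3 : ℝ) (w1 w2 : Fin n → ℝ)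
    (hm1 : ∀ q, q ∉ Q0 D xb → mu1 q = 0)
    (hm3 : (∑ i, yb i) ≠ (n : ℝ) - D.s → m3 = 0)
    (hw1 : ∀ i, xb i ≠ 0 → w1 i = 0)
    (hw2 : ∀ i, yb i ≠ 0 → yb i ≠ 1 + D.ε → w2 i = 0)
    (heq : (∑ p, lam p • ((grad (D.h p) xb, (0 : Vec n)) : Vec n × Vec n))
      + (∑ q, mu1 q • ((grad (D.g q) xb, (0 : Vec n)) : Vec n × Vec n))
      + m3 • eAll
      + (∑ i, w1 i • ex i)
      + (∑ i, w2 i • ey i) = 0) :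
    (∀ p, lam p = 0) ∧ (∀ q, mu1 q = 0) ∧ m3 = 0 ∧ (∀ i, w1 i = 0) ∧ (∀ i, w2 i = 0) := by
  have hQ : (∑ q, mu1 q • ((grad (D.g q) xb, (0 : Vec n)) : Vec n × Vec n))
      = ∑ q ∈ Q0 D xb, mu1 q • ((grad (D.g q) xb, (0 : Vec n)) : Vec n × Vec n) :=
    (Finset.sum_subset (Finset.subset_univ _)
      (fun q _ hq => by rw [hm1 q hq, zero_smul])).symm
  have hx1 : ∀ i, i ∉ a01 xb yb ∪ a00 xb yb → xb i ≠ 0 := by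
    intro i hi hxi
    rw [Finset.mem_union] at hi
    push_neg at hi
    rcases (hy0 i).lt_or_eq with h | h
    · exact hi.1 (mem_a01_iff.2 ⟨hxi, h⟩)
    · exact hi.2 (mem_a00_iff.2 ⟨hxi, h.symm⟩)
  have hW1 : (∑ i, w1 i • ex i) = ∑ i ∈ a01 xb yb ∪ a00 xb yb, w1 i • ex i :=
    (Finset.sum_subset (Finset.subset_univ _)
      (fun i _ hi => by rw [hw1 i (hx1 i hi), zero_smul])).symm
  have hdisj : Disjoint (Eact D yb) (a10 xb yb ∪ a00 xb yb) := by
    rw [Finset.disjoint_left]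
    intro i hiE hiU
    have h1 := mem_Eact_iff.1 hiE
    have h2 : yb i = 0 := by
      rcases Finset.mem_union.1 hiU with h | h
      · exact (mem_a10_iff.1 h).2
      · exact (mem_a00_iff.1 h).2
    rw [h2] at h1
    have := D.hεpos
    linarith
  have hcover : ∀ i, i ∉ Eact D yb ∪ (a10 xb yb ∪ a00 xb yb) → w2 i = 0 := by
    intro i hi
    rw [Finset.mem_union, Finset.mem_union] at hi
    push_neg at hi
    apply hw2 i
    · intro h0
      by_cases hx : xb i = 0
      · exact hi.2.2 (mem_a00_iff.2 ⟨hx, h0⟩)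
      · exact hi.2.1 (mem_a10_iff.2 ⟨hx, h0⟩)
    · intro h1
      exact hi.1 (mem_Eact_iff.2 h1)
  have hW2 : (∑ i, w2 i • ey i)
      = (∑ i ∈ Eact D yb, w2 i • ey i) + ∑ i ∈ a10 xb yb ∪ a00 xb yb, w2 i • ey i := by
    rw [← Finset.sum_union hdisj]
    exact (Finset.sum_subset (Finset.subset_univ _)
      (fun i _ hi => by rw [hcover i hi, zero_smul])).symm
  rw [hQ, hW1, hW2] at heq
  have key := hL lam mu1 w2 m3 w1 w2 hm3 (by rw [← heq]; abel)
  obtain ⟨h1, h2, h3, h4, h5, h6⟩ := key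
  refine ⟨h1, ?_, h4, ?_, ?_⟩
  · intro q
    by_cases hq : q ∈ Q0 D xb
    · exact h2 q hq
    · exact hm1 q hq
  · intro i
    by_cases hx : xb i = 0
    · apply h5
      rw [Finset.mem_union]
      rcases (hy0 i).lt_or_eq with h | h
      · exact Or.inl (mem_a01_iff.2 ⟨hx, h⟩)
      · exact Or.inr (mem_a00_iff.2 ⟨hx, h.symm⟩)
    · exact hw1 i hx
  · intro i
    by_cases hyE : yb i = 1 + D.ε
    · exact h3 i (mem_Eact_iff.2 hyE)
    · by_cases hy : yb i = 0
      · apply h6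
        rw [Finset.mem_union]
        by_cases hx : xb i = 0
        · exact Or.inr (mem_a00_iff.2 ⟨hx, hy⟩)
        · exact Or.inl (mem_a10_iff.2 ⟨hx, hy⟩)
      · exact hw2 i hy hyE

end Aux3
section Aux4

/-- Normalizing denominator for the KKT multipliers. -/
def rden (D : Setting n P Q) (t : ℝ) (x y : Vec n) (M : SMult n P Q) : ℝ :=
  1 + ((∑ p, |M.lam p|) + (∑ q, |if q ∈ Q0 D x then M.mu1 q else 0|) + |M.mu3|
    + ∑ i, (|w1c t x y M i| + |w2c D t x y M i|))

lemma one_le_rden (D : Setting n P Q) (t : ℝ) (x y : Vec n) (M : SMult n P Q) :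
    1 ≤ rden D t x y M := by
  have h1 : (0:ℝ) ≤ ∑ p, |M.lam p| := by positivity
  have h2 : (0:ℝ) ≤ ∑ q, |if q ∈ Q0 D x then M.mu1 q else 0| := by positivity
  have h3 : (0:ℝ) ≤ |M.mu3| := abs_nonneg _
  have h4 : (0:ℝ) ≤ ∑ i, (|w1c t x y M i| + |w2c D t x y M i|) := by positivity
  unfold rden; linarith

lemma rden_pos (D : Setting n P Q) (t : ℝ) (x y : Vec n) (M : SMult n P Q) :
    0 < rden D t x y M := lt_of_lt_of_le one_pos (one_le_rden D t x y M)

lemma abs_lam_le_rden (D : Setting n P Q) (t : ℝ) (x y : Vec n) (M : SMult n P Q) (p : P) :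
    |M.lam p| ≤ rden D t x y M := by
  have h0 : |M.lam p| ≤ ∑ p, |M.lam p| :=
    Finset.single_le_sum (f := fun p => |M.lam p|) (fun _ _ => abs_nonneg _) (Finset.mem_univ p)
  have h2 : (0:ℝ) ≤ ∑ q, |if q ∈ Q0 D x then M.mu1 q else 0| := by positivity
  have h3 : (0:ℝ) ≤ |M.mu3| := abs_nonneg _
  have h4 : (0:ℝ) ≤ ∑ i, (|w1c t x y M i| + |w2c D t x y M i|) := by positivity
  unfold rden; linarith

lemma abs_mu1t_le_rden (D : Setting n P Q) (t : ℝ) (x y : Vec n) (M : SMult n P Q) (q : Q) :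
    |if q ∈ Q0 D x then M.mu1 q else 0| ≤ rden D t x y M := by
  have h0 : |if q ∈ Q0 D x then M.mu1 q else 0|
      ≤ ∑ q, |if q ∈ Q0 D x then M.mu1 q else 0| :=
    Finset.single_le_sum (f := fun q => |if q ∈ Q0 D x then M.mu1 q else 0|)
      (fun _ _ => abs_nonneg _) (Finset.mem_univ q)
  have h1 : (0:ℝ) ≤ ∑ p, |M.lam p| := by positivity
  have h3 : (0:ℝ) ≤ |M.mu3| := abs_nonneg _
  have h4 : (0:ℝ) ≤ ∑ i, (|w1c t x y M i| + |w2c D t x y M i|) := by positivity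
  unfold rden; linarith

lemma abs_mu3_le_rden (D : Setting n P Q) (t : ℝ) (x y : Vec n) (M : SMult n P Q) :
    |M.mu3| ≤ rden D t x y M := by
  have h1 : (0:ℝ) ≤ ∑ p, |M.lam p| := by positivity
  have h2 : (0:ℝ) ≤ ∑ q, |if q ∈ Q0 D x then M.mu1 q else 0| := by positivity
  have h4 : (0:ℝ) ≤ ∑ i, (|w1c t x y M i| + |w2c D t x y M i|) := by positivity
  unfold rden; linarith

lemma abs_w_le_rden (D : Setting n P Q) (t : ℝ) (x y : Vec n) (M : SMult n P Q) (i : Fin n) :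
    |w1c t x y M i| ≤ rden D t x y M ∧ |w2c D t x y M i| ≤ rden D t x y M := by
  have h0 : |w1c t x y M i| + |w2c D t x y M i|
      ≤ ∑ i, (|w1c t x y M i| + |w2c D t x y M i|) :=
    Finset.single_le_sum (f := fun i => |w1c t x y M i| + |w2c D t x y M i|)
      (fun _ _ => by positivity) (Finset.mem_univ i)
  have h1 : (0:ℝ) ≤ ∑ p, |M.lam p| := by positivity
  have h2 : (0:ℝ) ≤ ∑ q, |if q ∈ Q0 D x then M.mu1 q else 0| := by positivity
  have h3 : (0:ℝ) ≤ |M.mu3| := abs_nonneg _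
  have ha := abs_nonneg (w1c t x y M i)
  have hb := abs_nonneg (w2c D t x y M i)
  constructor <;> (unfold rden; linarith)

lemma rden_identity (D : Setting n P Q) (t : ℝ) (x y : Vec n) (M : SMult n P Q) :
    (rden D t x y M)⁻¹
      + ((∑ p, |(rden D t x y M)⁻¹ * M.lam p|)
        + (∑ q, |(rden D t x y M)⁻¹ * (if q ∈ Q0 D x then M.mu1 q else 0)|)
        + |(rden D t x y M)⁻¹ * M.mu3|
        + ∑ i, (|(rden D t x y M)⁻¹ * w1c t x y M i|
            + |(rden D t x y M)⁻¹ * w2c D t x y M i|)) = 1 := by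
  set r := rden D t x y M with hr
  have hrpos : 0 < r := rden_pos D t x y M
  simp only [abs_mul, abs_inv, abs_of_pos hrpos]
  rw [show ∀ S1 S2 A S3 : ℝ, r⁻¹ + (S1 + S2 + r⁻¹ * A + S3) = r⁻¹ + (S1 + S2 + r⁻¹ * A + S3)
    from fun _ _ _ _ => rfl]
  have e1 : ∑ p, r⁻¹ * |M.lam p| = r⁻¹ * ∑ p, |M.lam p| := (Finset.mul_sum _ _ _).symm
  have e2 : ∑ q, r⁻¹ * |if q ∈ Q0 D x then M.mu1 q else 0|
      = r⁻¹ * ∑ q, |if q ∈ Q0 D x then M.mu1 q else 0| := (Finset.mul_sum _ _ _).symm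
  have e3 : ∑ i, (r⁻¹ * |w1c t x y M i| + r⁻¹ * |w2c D t x y M i|)
      = r⁻¹ * ∑ i, (|w1c t x y M i| + |w2c D t x y M i|) := by
    rw [Finset.mul_sum]
    exact Finset.sum_congr rfl fun i _ => (mul_add _ _ _).symm
  rw [e1, e2, e3]
  have : r⁻¹ + (r⁻¹ * (∑ p, |M.lam p|) + r⁻¹ * (∑ q, |if q ∈ Q0 D x then M.mu1 q else 0|)
      + r⁻¹ * |M.mu3| + r⁻¹ * ∑ i, (|w1c t x y M i| + |w2c D t x y M i|))
      = r⁻¹ * (1 + ((∑ p, |M.lam p|) + (∑ q, |if q ∈ Q0 D x then M.mu1 q else 0|) + |M.mu3|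
        + ∑ i, (|w1c t x y M i| + |w2c D t x y M i|))) := by ring
  rw [this, ← rden, ← hr]
  exact inv_mul_cancel₀ hrpos.ne'

end Aux4
section Core

lemma core_contradiction (D : Setting n P Q) (U : Ultrafilter ℕ) (t : ℕ → ℝ)
    (htpos : ∀ k, 0 < t k) (X Y : ℕ → Vec n) (M : ℕ → SMult n P Q)
    (hM : ∀ k, KKTAt D (t k) (X k) (Y k) (M k))
    (xb yb : Vec n)
    (hX : Filter.Tendsto X (U : Filter ℕ) (nhds xb))
    (hY : Filter.Tendsto Y (U : Filter ℕ) (nhds yb))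
    (Mb : TMult n P Q) (hnd : NondegTStatAt D xb yb Mb)
    (i0 : Fin n) (hi0 : i0 ∈ Eact D yb)
    (hi0' : ∀ᶠ k in (U : Filter ℕ), i0 ∉ Eact D (Y k)) : False := by
  classical
  have hfeas : feasR D xb yb := hnd.1.1
  have hxy0 : ∀ i, xb i * yb i = 0 := hfeas.2.2.2.1
  have hy0 : ∀ i, 0 ≤ yb i := fun i => (hfeas.2.2.2.2 i).1
  have hsum_ge : (n : ℝ) - D.s ≤ ∑ i, yb i := hfeas.2.2.1
  have hεpos := D.hεpos
  have hYi : ∀ i, Filter.Tendsto (fun k => Y k i) (U : Filter ℕ) (nhds (yb i)) :=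
    fun i => ((continuous_apply i).tendsto yb).comp hY
  have hXi : ∀ i, Filter.Tendsto (fun k => X k i) (U : Filter ℕ) (nhds (xb i)) :=
    fun i => ((continuous_apply i).tendsto xb).comp hX
  -- abbreviation for denominators
  set r : ℕ → ℝ := fun k => rden D (t k) (X k) (Y k) (M k) with hrdef
  have hr1 : ∀ k, 1 ≤ r k := fun k => one_le_rden D (t k) (X k) (Y k) (M k)
  have hr0 : ∀ k, 0 < r k := fun k => rden_pos D (t k) (X k) (Y k) (M k)
  -- the scaled KKT equation, valid for every k
  have heqk : ∀ k, (r k)⁻¹ • ((grad D.f (X k), D.c) : Vec n × Vec n) =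
      (∑ p, ((r k)⁻¹ * (M k).lam p) • ((grad (D.h p) (X k), (0:Vec n)) : Vec n × Vec n))
      + (∑ q, ((r k)⁻¹ * (if q ∈ Q0 D (X k) then (M k).mu1 q else 0)) •
          ((grad (D.g q) (X k), (0:Vec n)) : Vec n × Vec n))
      + ((r k)⁻¹ * (M k).mu3) • eAll
      + (∑ i, ((r k)⁻¹ * w1c (t k) (X k) (Y k) (M k) i) • ex i)
      + (∑ i, ((r k)⁻¹ * w2c D (t k) (X k) (Y k) (M k) i) • ey i) := by
    intro k
    have h := kkt_univ_form D (t k) (X k) (Y k) (M k) (hM k).2.2.2.2.2.2.2.2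
    rw [h]
    simp only [smul_add, Finset.smul_sum, smul_smul]
  -- limits of all normalized coefficients
  obtain ⟨ρ, hρ⟩ := exists_ulim U (fun k => (r k)⁻¹)
    (fun k => by
      have := abs_inv_mul_le (hr1 k) (by rw [abs_one]; exact hr1 k)
      simpa using this)
  have hLex : ∀ p : P, ∃ a, Filter.Tendsto (fun k => (r k)⁻¹ * (M k).lam p)
      (U : Filter ℕ) (nhds a) :=
    fun p => exists_ulim U _ (fun k =>
      abs_inv_mul_le (hr1 k) (abs_lam_le_rden D (t k) (X k) (Y k) (M k) p))
  choose L' hL' using hLex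
  have hm1ex : ∀ q : Q, ∃ a, Filter.Tendsto
      (fun k => (r k)⁻¹ * (if q ∈ Q0 D (X k) then (M k).mu1 q else 0))
      (U : Filter ℕ) (nhds a) :=
    fun q => exists_ulim U _ (fun k =>
      abs_inv_mul_le (hr1 k) (abs_mu1t_le_rden D (t k) (X k) (Y k) (M k) q))
  choose m1' hm1' using hm1ex
  obtain ⟨m3', hm3'⟩ := exists_ulim U (fun k => (r k)⁻¹ * (M k).mu3)
    (fun k => abs_inv_mul_le (hr1 k) (abs_mu3_le_rden D (t k) (X k) (Y k) (M k)))
  have hw1ex : ∀ i : Fin n, ∃ a, Filter.Tendsto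
      (fun k => (r k)⁻¹ * w1c (t k) (X k) (Y k) (M k) i) (U : Filter ℕ) (nhds a) :=
    fun i => exists_ulim U _ (fun k =>
      abs_inv_mul_le (hr1 k) (abs_w_le_rden D (t k) (X k) (Y k) (M k) i).1)
  choose w1' hw1' using hw1ex
  have hw2ex : ∀ i : Fin n, ∃ a, Filter.Tendsto
      (fun k => (r k)⁻¹ * w2c D (t k) (X k) (Y k) (M k) i) (U : Filter ℕ) (nhds a) :=
    fun i => exists_ulim U _ (fun k =>
      abs_inv_mul_le (hr1 k) (abs_w_le_rden D (t k) (X k) (Y k) (M k) i).2)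
  choose w2' hw2' using hw2ex
  -- limits of the gradient vectors
  have hgradh : ∀ p : P, Filter.Tendsto
      (fun k => ((grad (D.h p) (X k), (0:Vec n)) : Vec n × Vec n)) (U : Filter ℕ)
      (nhds (grad (D.h p) xb, (0:Vec n))) :=
    fun p => (((grad_continuous (D.hh p)).tendsto xb).comp hX).prodMk_nhds
      tendsto_const_nhds
  have hgradg : ∀ q : Q, Filter.Tendsto
      (fun k => ((grad (D.g q) (X k), (0:Vec n)) : Vec n × Vec n)) (U : Filter ℕ)
      (nhds (grad (D.g q) xb, (0:Vec n))) :=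
    fun q => (((grad_continuous (D.hg q)).tendsto xb).comp hX).prodMk_nhds
      tendsto_const_nhds
  have hgradf : Filter.Tendsto (fun k => ((grad D.f (X k), D.c) : Vec n × Vec n))
      (U : Filter ℕ) (nhds (grad D.f xb, D.c)) :=
    (((grad_continuous D.hf).tendsto xb).comp hX).prodMk_nhds tendsto_const_nhds
  -- the limit equation
  have hlim : ρ • ((grad D.f xb, D.c) : Vec n × Vec n) =
      (∑ p, L' p • ((grad (D.h p) xb, (0:Vec n)) : Vec n × Vec n))
      + (∑ q, m1' q • ((grad (D.g q) xb, (0:Vec n)) : Vec n × Vec n))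
      + m3' • eAll
      + (∑ i, w1' i • ex i)
      + (∑ i, w2' i • ey i) := by
    refine tendsto_nhds_unique (hρ.smul hgradf) ?_
    refine Filter.Tendsto.congr (fun k => (heqk k).symm) ?_
    exact ((((tendsto_finset_sum _ fun p _ => (hL' p).smul (hgradh p)).add
      (tendsto_finset_sum _ fun q _ => (hm1' q).smul (hgradg q))).add
      (hm3'.smul tendsto_const_nhds)).add
      (tendsto_finset_sum _ fun i _ => (hw1' i).smul tendsto_const_nhds)).add
      (tendsto_finset_sum _ fun i _ => (hw2' i).smul tendsto_const_nhds)
  -- vanishing of m1' outside Q0(xb)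
  have hP1 : ∀ q, D.g q xb ≠ 0 → m1' q = 0 := by
    intro q hq
    have hg : Filter.Tendsto (fun k => D.g q (X k)) (U : Filter ℕ) (nhds (D.g q xb)) :=
      (((D.hg q).continuous).tendsto xb).comp hX
    have hev : ∀ᶠ k in (U : Filter ℕ), D.g q (X k) ≠ 0 :=
      hg (isOpen_compl_singleton.mem_nhds hq)
    have hzz : (fun k => (r k)⁻¹ * (if q ∈ Q0 D (X k) then (M k).mu1 q else 0))
        =ᶠ[(U : Filter ℕ)] fun _ => (0:ℝ) := by
      filter_upwards [hev] with k hk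
      rw [if_neg (fun hmem => hk (mem_Q0_iff.1 hmem)), mul_zero]
    exact tendsto_nhds_unique (hm1' q) hzz.tendsto
  -- vanishing of the multipliers for the cardinality constraint
  have hP2 : (∑ i, yb i) ≠ (n : ℝ) - D.s → m3' = 0 ∧ Mb.mu3 = 0 := by
    intro hne
    have hgt : (n : ℝ) - D.s < ∑ i, yb i := lt_of_le_of_ne hsum_ge (Ne.symm hne)
    constructor
    · have hsumt : Filter.Tendsto (fun k => ∑ i, Y k i) (U : Filter ℕ)
          (nhds (∑ i, yb i)) := tendsto_finset_sum _ fun i _ => hYi i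
      have hev : ∀ᶠ k in (U : Filter ℕ), (n : ℝ) - D.s < ∑ i, Y k i :=
        hsumt (isOpen_Ioi.mem_nhds hgt)
      have hzz : (fun k => (r k)⁻¹ * (M k).mu3) =ᶠ[(U : Filter ℕ)] fun _ => (0:ℝ) := by
        filter_upwards [hev] with k hk
        have hc := (hM k).2.2.2.2.1
        have hfac : (∑ i, Y k i) - ((n : ℝ) - D.s) ≠ 0 := by linarith
        have : (M k).mu3 = 0 := by
          rcases mul_eq_zero.1 hc with h | h
          · exact h
          · exact absurd h hfac
        rw [this, mul_zero]
      exact tendsto_nhds_unique hm3' hzz.tendsto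
    · have hc := hnd.1.2.2.2.2.1
      have hfac : (∑ i, yb i) - ((n : ℝ) - D.s) ≠ 0 := by linarith
      rcases mul_eq_zero.1 hc with h | h
      · exact h
      · exact absurd h hfac
  -- the key product identity between the limit coefficients
  have hPeq : ∀ i, (∀ᶠ k in (U : Filter ℕ), i ∉ Eact D (Y k)) →
      |w1' i| * |xb i| = |w2' i| * |yb i| := by
    intro i hiE
    have h1 : Filter.Tendsto
        (fun k => |(r k)⁻¹ * w1c (t k) (X k) (Y k) (M k) i| * |X k i|)
        (U : Filter ℕ) (nhds (|w1' i| * |xb i|)) := ((hw1' i).abs).mul ((hXi i).abs)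
    have h2 : Filter.Tendsto
        (fun k => |(r k)⁻¹ * w2c D (t k) (X k) (Y k) (M k) i| * |Y k i|)
        (U : Filter ℕ) (nhds (|w2' i| * |yb i|)) := ((hw2' i).abs).mul ((hYi i).abs)
    have hEq : (fun k => |(r k)⁻¹ * w1c (t k) (X k) (Y k) (M k) i| * |X k i|)
        =ᶠ[(U : Filter ℕ)]
        (fun k => |(r k)⁻¹ * w2c D (t k) (X k) (Y k) (M k) i| * |Y k i|) := by
      filter_upwards [hiE] with k hk
      have hW := w_abs D (htpos k) (X k) (Y k) (M k) i hk
      rw [abs_mul, abs_mul, mul_assoc, mul_assoc, hW]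
    exact tendsto_nhds_unique h1 (h2.congr' hEq.symm)
  -- eventual non-membership in Eact for coordinates with yb i ≠ 1 + ε
  have hEavoid : ∀ i, yb i ≠ 1 + D.ε → ∀ᶠ k in (U : Filter ℕ), i ∉ Eact D (Y k) := by
    intro i hne
    have hev : ∀ᶠ k in (U : Filter ℕ), Y k i ≠ 1 + D.ε :=
      (hYi i) (isOpen_compl_singleton.mem_nhds hne)
    filter_upwards [hev] with k hk hmem
    exact hk (mem_Eact_iff.1 hmem)
  -- vanishing of w1' where xb i ≠ 0
  have hW1z : ∀ i, xb i ≠ 0 → w1' i = 0 := by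
    intro i hx
    have hy : yb i = 0 := by
      rcases mul_eq_zero.1 (hxy0 i) with h | h
      · exact absurd h hx
      · exact h
    have hiE : ∀ᶠ k in (U : Filter ℕ), i ∉ Eact D (Y k) :=
      hEavoid i (by rw [hy]; intro h; linarith)
    have h := hPeq i hiE
    rw [hy, abs_zero, mul_zero] at h
    rcases mul_eq_zero.1 h with h' | h'
    · exact abs_eq_zero.1 h'
    · exact absurd (abs_eq_zero.1 h') hx
  -- vanishing of w2' where yb i ≠ 0 and i is eventually not in Eact
  have hW2z : ∀ i, yb i ≠ 0 → (∀ᶠ k in (U : Filter ℕ), i ∉ Eact D (Y k)) →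
      w2' i = 0 := by
    intro i hyne hiE
    have hx : xb i = 0 := by
      rcases mul_eq_zero.1 (hxy0 i) with h | h
      · exact h
      · exact absurd h hyne
    have h := hPeq i hiE
    rw [hx, abs_zero, mul_zero] at h
    rcases mul_eq_zero.1 h.symm with h' | h'
    · exact abs_eq_zero.1 h'
    · exact absurd (abs_eq_zero.1 h') hyne
  have hW2z' : ∀ i, yb i ≠ 0 → yb i ≠ 1 + D.ε → w2' i = 0 :=
    fun i h1 h2 => hW2z i h1 (hEavoid i h2)
  -- the normalization identity in the limit
  have hid : (1:ℝ) = ρ + ((∑ p, |L' p|) + (∑ q, |m1' q|) + |m3'|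
      + ∑ i, (|w1' i| + |w2' i|)) := by
    have hidk : ∀ k, (r k)⁻¹
        + ((∑ p, |(r k)⁻¹ * (M k).lam p|)
          + (∑ q, |(r k)⁻¹ * (if q ∈ Q0 D (X k) then (M k).mu1 q else 0)|)
          + |(r k)⁻¹ * (M k).mu3|
          + ∑ i, (|(r k)⁻¹ * w1c (t k) (X k) (Y k) (M k) i|
              + |(r k)⁻¹ * w2c D (t k) (X k) (Y k) (M k) i|)) = 1 :=
      fun k => rden_identity D (t k) (X k) (Y k) (M k)
    refine tendsto_nhds_unique (l := (U : Filter ℕ)) (f := fun k => (r k)⁻¹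
        + ((∑ p, |(r k)⁻¹ * (M k).lam p|)
          + (∑ q, |(r k)⁻¹ * (if q ∈ Q0 D (X k) then (M k).mu1 q else 0)|)
          + |(r k)⁻¹ * (M k).mu3|
          + ∑ i, (|(r k)⁻¹ * w1c (t k) (X k) (Y k) (M k) i|
              + |(r k)⁻¹ * w2c D (t k) (X k) (Y k) (M k) i|)))
      ?_ ?_
    · exact Filter.Tendsto.congr (fun k => (hidk k).symm) tendsto_const_nhds
    · exact hρ.add ((((tendsto_finset_sum _ fun p _ => (hL' p).abs).add
        (tendsto_finset_sum _ fun q _ => (hm1' q).abs)).add hm3'.abs).add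
        (tendsto_finset_sum _ fun i _ => ((hw1' i).abs).add ((hw2' i).abs)))
  have hρ0 : 0 ≤ ρ := ge_of_tendsto' hρ (fun k => inv_nonneg.2 (hr0 k).le)
  have hQ0mem : ∀ q, q ∉ Q0 D xb → D.g q xb ≠ 0 := by
    intro q hq h
    exact hq (mem_Q0_iff.2 h)
  rcases eq_or_lt_of_le hρ0 with hρz | hρpos
  · -- degenerate case: the normalized multipliers tend to zero, contradiction
    rw [← hρz, zero_smul] at hlim
    obtain ⟨hz1, hz2, hz3, hz4, hz5⟩ := licq_univ D xb yb hnd.2.1 hy0 L' m1' m3' w1' w2'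
      (fun q hq => hP1 q (hQ0mem q hq)) (fun h => (hP2 h).1) hW1z hW2z' hlim.symm
    rw [← hρz] at hid
    have e1 : (∑ p, |L' p|) = 0 := by
      apply Finset.sum_eq_zero; intro p _; rw [hz1 p, abs_zero]
    have e2 : (∑ q, |m1' q|) = 0 := by
      apply Finset.sum_eq_zero; intro q _; rw [hz2 q, abs_zero]
    have e4 : (∑ i, (|w1' i| + |w2' i|)) = 0 := by
      apply Finset.sum_eq_zero; intro i _; rw [hz4 i, hz5 i, abs_zero, add_zero]
    rw [e1, e2, e4, hz3, abs_zero] at hid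
    norm_num at hid
  · -- main case: rescale and subtract the T-stationarity equation
    have hmain : ((grad D.f xb, D.c) : Vec n × Vec n) =
        (∑ p, (ρ⁻¹ * L' p) • ((grad (D.h p) xb, (0:Vec n)) : Vec n × Vec n))
        + (∑ q, (ρ⁻¹ * m1' q) • ((grad (D.g q) xb, (0:Vec n)) : Vec n × Vec n))
        + (ρ⁻¹ * m3') • eAll
        + (∑ i, (ρ⁻¹ * w1' i) • ex i)
        + (∑ i, (ρ⁻¹ * w2' i) • ey i) := by
      have h := congrArg (fun v : Vec n × Vec n => ρ⁻¹ • v) hlim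
      rw [inv_smul_smul₀ hρpos.ne'] at h
      rw [h]
      simp only [smul_add, Finset.smul_sum, smul_smul]
    have hT := tstat_univ_form D xb yb Mb hnd.1.2.2.2.2.2.2
    have hsub : (0 : Vec n × Vec n) =
        (∑ p, (ρ⁻¹ * L' p - Mb.lam p) • ((grad (D.h p) xb, (0:Vec n)) : Vec n × Vec n))
        + (∑ q, (ρ⁻¹ * m1' q - (if q ∈ Q0 D xb then Mb.mu1 q else 0)) •
            ((grad (D.g q) xb, (0:Vec n)) : Vec n × Vec n))
        + (ρ⁻¹ * m3' - Mb.mu3) • eAll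
        + (∑ i, (ρ⁻¹ * w1' i - ((if i ∈ a01 xb yb then Mb.sig1 i else 0)
            + (if i ∈ a00 xb yb then Mb.rho1 i else 0))) • ex i)
        + (∑ i, (ρ⁻¹ * w2' i - ((if i ∈ a10 xb yb then Mb.sig2 i else 0)
            + (if i ∈ a00 xb yb then Mb.rho2 i else 0)
            - (if i ∈ Eact D yb then Mb.mu2 i else 0))) • ey i) := by
      have h0 : ((∑ p, (ρ⁻¹ * L' p) • ((grad (D.h p) xb, (0:Vec n)) : Vec n × Vec n))
          + (∑ q, (ρ⁻¹ * m1' q) • ((grad (D.g q) xb, (0:Vec n)) : Vec n × Vec n))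
          + (ρ⁻¹ * m3') • eAll
          + (∑ i, (ρ⁻¹ * w1' i) • ex i)
          + (∑ i, (ρ⁻¹ * w2' i) • ey i))
          - ((∑ p, Mb.lam p • ((grad (D.h p) xb, (0:Vec n)) : Vec n × Vec n))
          + (∑ q, (if q ∈ Q0 D xb then Mb.mu1 q else 0) •
              ((grad (D.g q) xb, (0:Vec n)) : Vec n × Vec n))
          + Mb.mu3 • eAll
          + (∑ i, ((if i ∈ a01 xb yb then Mb.sig1 i else 0)
              + (if i ∈ a00 xb yb then Mb.rho1 i else 0)) • ex i)
          + (∑ i, ((if i ∈ a10 xb yb then Mb.sig2 i else 0)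
              + (if i ∈ a00 xb yb then Mb.rho2 i else 0)
              - (if i ∈ Eact D yb then Mb.mu2 i else 0)) • ey i)) = 0 := by
        rw [← hmain, ← hT, sub_self]
      rw [← h0]
      simp only [sub_smul, Finset.sum_sub_distrib]
      abel
    obtain ⟨hz1, hz2, hz3, hz4, hz5⟩ := licq_univ D xb yb hnd.2.1 hy0 _ _ _ _ _
      (fun q hq => by
        rw [hP1 q (hQ0mem q hq), mul_zero, if_neg hq, sub_zero])
      (fun h => by rw [(hP2 h).1, (hP2 h).2, mul_zero, sub_zero])
      (fun i hx => by
        have ha01 : i ∉ a01 xb yb := fun hmem => hx (mem_a01_iff.1 hmem).1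
        have ha00 : i ∉ a00 xb yb := fun hmem => hx (mem_a00_iff.1 hmem).1
        rw [hW1z i hx, mul_zero, if_neg ha01, if_neg ha00, add_zero, sub_zero])
      (fun i hy1 hy2 => by
        have ha10 : i ∉ a10 xb yb := fun hmem => hy1 (mem_a10_iff.1 hmem).2
        have ha00 : i ∉ a00 xb yb := fun hmem => hy1 (mem_a00_iff.1 hmem).2
        have haE : i ∉ Eact D yb := fun hmem => hy2 (mem_Eact_iff.1 hmem)
        rw [hW2z' i hy1 hy2, mul_zero, if_neg ha10, if_neg ha00, if_neg haE,
          add_zero, sub_zero, sub_zero])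
      hsub.symm
    -- evaluate the ey-coefficient conclusion at i0
    have hkey := hz5 i0
    have hyb0 : yb i0 = 1 + D.ε := mem_Eact_iff.1 hi0
    have hyne : yb i0 ≠ 0 := by rw [hyb0]; intro h; linarith
    have hw2i0 : w2' i0 = 0 := hW2z i0 hyne hi0'
    have ha10 : i0 ∉ a10 xb yb := fun hmem => hyne (mem_a10_iff.1 hmem).2
    have ha00 : i0 ∉ a00 xb yb := fun hmem => hyne (mem_a00_iff.1 hmem).2
    rw [hw2i0, mul_zero, if_neg ha10, if_neg ha00, if_pos hi0] at hkey
    have hpos := hnd.2.2.2.1 i0 hi0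
    simp only [zero_add, zero_sub, neg_sub, sub_zero, neg_neg, neg_eq_zero] at hkey
    linarith

end Core

/-- Lemma 3b: if KKT points of S(t_k) converge to a
nondegenerate T-stationary point of R, then eventually E(ȳ) = E(y^k). -/
theorem statement11 {n : ℕ} {P Q : Type*} [Fintype P] [Fintype Q]
    (D : Setting n P Q) (t : ℕ → ℝ) (htpos : ∀ k, 0 < t k)
    (ht0 : Filter.Tendsto t Filter.atTop (nhds 0))
    (X Y : ℕ → Vec n) (hK : ∀ k, KKT D (t k) (X k) (Y k))
    (xb yb : Vec n)
    (hconv : Filter.Tendsto (fun k => ((X k, Y k) : Vec n × Vec n))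
      Filter.atTop (nhds (xb, yb)))
    (Mb : TMult n P Q) (hnd : NondegTStatAt D xb yb Mb) :
    ∃ K : ℕ, ∀ k ≥ K, Eact D yb = Eact D (Y k) := by
  classical
  by_contra hcon
  push_neg at hcon
  have hXt : Filter.Tendsto X Filter.atTop (nhds xb) :=
    (continuous_fst.tendsto ((xb, yb) : Vec n × Vec n)).comp hconv
  have hYt : Filter.Tendsto Y Filter.atTop (nhds yb) :=
    (continuous_snd.tendsto ((xb, yb) : Vec n × Vec n)).comp hconv
  have hYit : ∀ i, Filter.Tendsto (fun k => Y k i) Filter.atTop (nhds (yb i)) :=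
    fun i => ((continuous_apply i).tendsto yb).comp hYt
  have hsub : ∀ᶠ k in Filter.atTop, Eact D (Y k) ⊆ Eact D yb := by
    have hev : ∀ᶠ k in Filter.atTop, ∀ i ∈ (Finset.univ : Finset (Fin n)),
        (yb i ≠ 1 + D.ε → Y k i ≠ 1 + D.ε) := by
      rw [Finset.eventually_all]
      intro i _
      by_cases h : yb i = 1 + D.ε
      · filter_upwards with k h'
        exact absurd h h'
      · filter_upwards [(hYit i) (isOpen_compl_singleton.mem_nhds h)] with k hk
        exact fun _ => hk
    filter_upwards [hev] with k hk
    intro i hiE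
    by_contra hni
    exact hk i (Finset.mem_univ i) (fun h => hni (mem_Eact_iff.2 h)) (mem_Eact_iff.1 hiE)
  have hfr : ∃ i0 ∈ Eact D yb, ∃ᶠ k in Filter.atTop, i0 ∉ Eact D (Y k) := by
    by_contra h
    push_neg at h
    have hall : ∀ᶠ k in Filter.atTop, ∀ i ∈ Eact D yb, i ∈ Eact D (Y k) := by
      rw [Finset.eventually_all]
      intro i hi
      have h' := h i hi
      simpa using h'
    have heq : ∀ᶠ k in Filter.atTop, Eact D yb = Eact D (Y k) := by
      filter_upwards [hall, hsub] with k h1 h2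
      exact Finset.Subset.antisymm (fun i hi => h1 i hi) h2
    obtain ⟨K, hKK⟩ := Filter.eventually_atTop.1 heq
    obtain ⟨k, hkK, hne⟩ := hcon K
    exact hne (hKK k hkK)
  obtain ⟨i0, hi0, hfreq⟩ := hfr
  have hNB : (Filter.atTop ⊓ Filter.principal {k | i0 ∉ Eact D (Y k)}).NeBot :=
    frequently_iff_neBot.1 hfreq
  let U : Ultrafilter ℕ :=
    @Ultrafilter.of ℕ (Filter.atTop ⊓ Filter.principal {k | i0 ∉ Eact D (Y k)}) hNB
  have hUle : (U : Filter ℕ) ≤ Filter.atTop ⊓ Filter.principal {k | i0 ∉ Eact D (Y k)} :=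
    @Ultrafilter.of_le ℕ _ hNB
  have hUtop : (U : Filter ℕ) ≤ Filter.atTop := hUle.trans inf_le_left
  have hUev : ∀ᶠ k in (U : Filter ℕ), i0 ∉ Eact D (Y k) :=
    Filter.le_principal_iff.1 (hUle.trans inf_le_right)
  choose Ms hMs using hK
  exact core_contradiction D U t htpos X Y Ms hMs xb yb
    (hXt.mono_left hUtop) (hYt.mono_left hUtop) Mb hnd i0 hi0 hUev

end Scholtes
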